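/- For all natural numbers k ≥ 1 and n ≥ 1, if 3^n > 2^{k+1} then R(k+1, n) = R(k, n) + R(k, n−1). -/

import Mathlib

/-- The 3x+1 map: `T x = x/2` if `x` is even, `(3x+1)/2` if `x` is odd. -/
def T (x : ℕ) : ℕ := if x % 2 = 0 then x / 2 else (3 * x + 1) / 2

/-- `m k x` is the number of indices `s` with `0 ≤ s < k` such that `T^[s] x` is odd. -/
def m (k x : ℕ) : ℕ := ((Finset.range k).filter (fun s => T^[s] x % 2 = 1)).card

lemma m_succ (k x : ℕ) :
    m (k+1) x = m k x + (if T^[k] x % 2 = 1 then 1 else 0) := by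
  unfold m
  rw [Finset.range_add_one, Finset.filter_insert]
  split
  · rw [Finset.card_insert_of_notMem (by simp)]
  · simp

lemma T_add (x t : ℕ) :
    T (x + 2 * t) = T x + (if x % 2 = 0 then 1 else 3) * t := by
  unfold T
  rcases Nat.even_or_odd x with ⟨q, hq⟩ | ⟨q, hq⟩ <;> subst hq <;>
    split <;> split <;> omega

lemma iter_add (k : ℕ) : ∀ s, s ≤ k → ∀ x a,
    T^[s] (x + 2^k * a) = T^[s] x + 2^(k-s) * (3^(m s x) * a) := by
  intro s
  induction s with
  | zero => intro _ x a; simp [m]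
  | succ s ih =>
    intro hs x a
    have hs' : s ≤ k := by omega
    rw [Function.iterate_succ_apply', Function.iterate_succ_apply', ih hs' x a]
    have hk : 2^(k-s) = 2 * 2^(k-(s+1)) := by
      rw [← pow_succ']; congr 1; omega
    rw [hk, mul_assoc, T_add, m_succ]
    by_cases hp : T^[s] x % 2 = 0
    · rw [if_pos hp, if_neg (by omega)]; ring
    · rw [if_neg hp, if_pos (by omega)]; ring

lemma iter_mod (k s x a : ℕ) (hs : s < k) :
    T^[s] (x + 2^k * a) % 2 = T^[s] x % 2 := by
  rw [iter_add k s hs.le]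
  obtain ⟨d, hd⟩ : ∃ d, k - s = d + 1 := ⟨k - s - 1, by omega⟩
  rw [hd, pow_succ, mul_comm ((2:ℕ)^d) 2, mul_assoc]
  omega

lemma m_eq (k j x a : ℕ) (hj : j ≤ k) : m j (x + 2^k * a) = m j x := by
  unfold m
  congr 1
  apply Finset.filter_congr
  intro s hs
  rw [Finset.mem_range] at hs
  rw [iter_mod k s x a (by omega)]

lemma iter_k (k x a : ℕ) : T^[k] (x + 2^k * a) = T^[k] x + 3^(m k x) * a := by
  rw [iter_add k k le_rfl]; simp

lemma odd3 (n : ℕ) : 3^n % 2 = 1 := by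
  rw [Nat.pow_mod]; simp

lemma div2_le_one {k a : ℕ} (ha : a < 2^(k+1)) : a / 2^k ≤ 1 := by
  have h2 : a < 2 * 2^k := by rw [pow_succ'] at ha; exact ha
  have := (Nat.div_lt_iff_lt_mul (by positivity : (0:ℕ) < 2 ^ k)).2 h2
  omega

lemma part_bij (k n t p : ℕ) (hp : p ≤ 1) (h : 2^(k+1) < 3^n) (hrel : t + p = n) :
    {r' : ℕ | (r' < 2^(k+1) ∧ m (k+1) r' = n ∧
        ∀ j, 1 ≤ j → j ≤ k+1 → 2^j < 3^(m j r')) ∧ T^[k] r' % 2 = p}.ncard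
    = {r : ℕ | r < 2^k ∧ m k r = t ∧ ∀ j, 1 ≤ j → j ≤ k → 2^j < 3^(m j r)}.ncard := by
  set A := {r' : ℕ | (r' < 2^(k+1) ∧ m (k+1) r' = n ∧
      ∀ j, 1 ≤ j → j ≤ k+1 → 2^j < 3^(m j r')) ∧ T^[k] r' % 2 = p} with hA
  set S := {r : ℕ | r < 2^k ∧ m k r = t ∧ ∀ j, 1 ≤ j → j ≤ k → 2^j < 3^(m j r)} with hS
  have hkpos : 0 < 2^k := Nat.pow_pos (by norm_num)
  have hinj : Set.InjOn (· % 2^k) A := by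
    rintro a ⟨⟨ha1, _⟩, ha2⟩ b ⟨⟨hb1, _⟩, hb2⟩ hab
    simp only at hab
    have hda : a % 2^k + 2^k * (a / 2^k) = a := Nat.mod_add_div _ _
    have hdb : b % 2^k + 2^k * (b / 2^k) = b := Nat.mod_add_div _ _
    have hea : a / 2^k ≤ 1 := div2_le_one ha1
    have heb : b / 2^k ≤ 1 := div2_le_one hb1
    have hia : T^[k] a = T^[k] (a % 2^k) + 3^(m k (a % 2^k)) * (a / 2^k) := by
      conv_lhs => rw [← hda]
      rw [iter_k]
    have hib : T^[k] b = T^[k] (b % 2^k) + 3^(m k (b % 2^k)) * (b / 2^k) := by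
      conv_lhs => rw [← hdb]
      rw [iter_k]
    rw [← hab] at hib
    have hodd := odd3 (m k (a % 2^k))
    have he : a / 2^k = b / 2^k := by
      rcases Nat.le_one_iff_eq_zero_or_eq_one.1 hea with h' | h' <;>
      rcases Nat.le_one_iff_eq_zero_or_eq_one.1 heb with h'' | h'' <;>
        rw [h'] at hia <;> rw [h''] at hib <;>
        simp only [mul_zero, mul_one] at hia hib <;> omega
    rw [hab] at hda
    rw [he] at hda
    omega
  have himg : (· % 2^k) '' A = S := by
    ext r
    constructor
    · rintro ⟨r', ⟨⟨h1, h2, h3⟩, h4⟩, hr⟩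
      simp only at hr
      subst hr
      have hd : r' % 2^k + 2^k * (r' / 2^k) = r' := Nat.mod_add_div _ _
      have hmk : m k r' = m k (r' % 2^k) := by
        have := m_eq k k (r' % 2^k) (r' / 2^k) le_rfl
        rw [hd] at this; exact this
      refine ⟨Nat.mod_lt _ hkpos, ?_, ?_⟩
      · have hms := m_succ k r'
        have hite : (if T^[k] r' % 2 = 1 then 1 else 0) = p := by
          rw [h4]; split <;> omega
        rw [hite] at hms
        omega
      · intro j hj1 hjk
        have hmj := m_eq k j (r' % 2^k) (r' / 2^k) hjk
        rw [hd] at hmj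
        rw [← hmj]
        exact h3 j hj1 (by omega)
    · rintro ⟨h1, h2, h3⟩
      have h2k : (2:ℕ)^(k+1) = 2^k * 2 := pow_succ 2 k
      by_cases hpar : T^[k] r % 2 = p
      · refine ⟨r, ⟨⟨by omega, ?_, ?_⟩, hpar⟩, Nat.mod_eq_of_lt h1⟩
        · have hms := m_succ k r
          rw [hpar] at hms
          split at hms <;> omega
        · intro j hj1 hjk
          rcases Nat.lt_or_ge j (k+1) with hj | hj
          · exact h3 j hj1 (by omega)
          · have hjeq : j = k + 1 := by omega
            subst hjeq
            have hms := m_succ k r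
            rw [hpar] at hms
            have : m (k+1) r = n := by split at hms <;> omega
            rw [this]; exact h
      · refine ⟨r + 2^k * 1, ⟨⟨by omega, ?_, ?_⟩, ?_⟩, ?_⟩
        · have hms := m_succ k (r + 2^k * 1)
          have hmkk := m_eq k k r 1 le_rfl
          have hik := iter_k k r 1
          have hodd := odd3 (m k r)
          rw [hik] at hms
          rw [hmkk] at hms
          have hpar2 : (T^[k] r + 3^(m k r) * 1) % 2 = p := by omega
          rw [hpar2] at hms
          split at hms <;> omega
        · intro j hj1 hjk
          rcases Nat.lt_or_ge j (k+1) with hj | hj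
          · rw [m_eq k j r 1 (by omega)]
            exact h3 j hj1 (by omega)
          · have hjeq : j = k + 1 := by omega
            subst hjeq
            have hms := m_succ k (r + 2^k * 1)
            have hmkk := m_eq k k r 1 le_rfl
            have hik := iter_k k r 1
            have hodd := odd3 (m k r)
            rw [hik] at hms
            rw [hmkk] at hms
            have hn : m (k+1) (r + 2^k * 1) = n := by
              split at hms <;> omega
            rw [hn]; exact h
        · have hik := iter_k k r 1
          have hodd := odd3 (m k r)
          rw [hik]; omega
        · show (r + 2^k * 1) % 2^k = r
          rw [mul_one, Nat.add_mod_right]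
          exact Nat.mod_eq_of_lt h1
  calc A.ncard = ((· % 2^k) '' A).ncard := (Set.ncard_image_of_injOn hinj).symm
    _ = S.ncard := by rw [himg]

/-- `R k n` is the number of residues `r ∈ {0,…,2^k − 1}` with `m k r = n` and
`3^(m j r) > 2^j` for all `1 ≤ j ≤ k`. -/
noncomputable def R (k n : ℕ) : ℕ :=
  {r : ℕ | r < 2 ^ k ∧ m k r = n ∧ ∀ j, 1 ≤ j → j ≤ k → 2 ^ j < 3 ^ (m j r)}.ncard

theorem stmt14 (k n : ℕ) (hk : 1 ≤ k) (hn : 1 ≤ n) (h : 2 ^ (k + 1) < 3 ^ n) :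
    R (k + 1) n = R k n + R k (n - 1) := by
  unfold R
  have hU : {r : ℕ | r < 2^(k+1) ∧ m (k+1) r = n ∧ ∀ j, 1 ≤ j → j ≤ k+1 → 2^j < 3^(m j r)}
      = {r' : ℕ | (r' < 2^(k+1) ∧ m (k+1) r' = n ∧
          ∀ j, 1 ≤ j → j ≤ k+1 → 2^j < 3^(m j r')) ∧ T^[k] r' % 2 = 0}
      ∪ {r' : ℕ | (r' < 2^(k+1) ∧ m (k+1) r' = n ∧
          ∀ j, 1 ≤ j → j ≤ k+1 → 2^j < 3^(m j r')) ∧ T^[k] r' % 2 = 1} := by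
    ext r
    constructor
    · intro hr
      rcases Nat.mod_two_eq_zero_or_one (T^[k] r) with h0 | h1
      · exact Or.inl ⟨hr, h0⟩
      · exact Or.inr ⟨hr, h1⟩
    · rintro (⟨hr, _⟩ | ⟨hr, _⟩) <;> exact hr
  rw [hU, Set.ncard_union_eq ?dis ?f1 ?f2,
    part_bij k n n 0 (by norm_num) h (by omega),
    part_bij k n (n-1) 1 le_rfl h (by omega)]
  case dis =>
    rw [Set.disjoint_left]
    rintro r ⟨_, h0⟩ ⟨_, h1⟩
    omega
  case f1 => exact (Set.finite_Iio _).subset (fun r hr => hr.1.1)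
  case f2 => exact (Set.finite_Iio _).subset (fun r hr => hr.1.1)
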